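/- In the setting of the previous statement, suppose additionally that Z = BA is a Demmler–Reinsch design matrix, i.e. A is invertible with AᵀBᵀBA = nI_d and AᵀRA = diag(0,…,0,γ_{q+1},…,γ_d) with the first q diagonal entries zero and γ_j > 0 for j > q, and that the first q columns of Z span the same subspace of ℝⁿ as the columns of X. Then, expressing b = Au, the proper conditional O-splines prior density factorizes as p̃(u | τ²) = Π_{j=1}^q N₁(u_j; 0, τ²_poly) · Π_{j=q+1}^d N₁(u_j; 0, τ²/γ_j), i.e. the transformed precision matrix Aᵀ(R/τ² + BᵀHB/(nτ²_poly))A is diagonal with entries 1/τ²_poly (q times) followed by γ_j/τ². -/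
import Mathlib


open Matrix

/-- Proposition 4(iii): in Demmler–Reinsch coordinates, the proper conditional
O-splines prior factorizes into independent Gaussians — the transformed precision
matrix `Aᵀ(R/τ² + BᵀHB/(nτ²_poly))A` is diagonal with entries `1/τ²_poly` on the
first `q` (polynomial) coordinates and `γⱼ/τ²` on the remaining ones. -/
theorem stmt_18 (n d q : ℕ) (hq : 1 ≤ q) (hqd : q ≤ d)
    (B : Matrix (Fin n) (Fin d) ℝ) (hB : B.rank = d)
    (R : Matrix (Fin d) (Fin d) ℝ) (hR : R.PosSemidef)
    (hker : Module.finrank ℝ (LinearMap.ker R.mulVecLin) = q)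
    (X : Matrix (Fin n) (Fin q) ℝ) (hX : X.rank = q)
    (hspan : Submodule.span ℝ (Set.range fun j => fun i => X i j)
      = Submodule.map B.mulVecLin (LinearMap.ker R.mulVecLin))
    (A : Matrix (Fin d) (Fin d) ℝ) (hA : IsUnit A.det)
    (γ : Fin d → ℝ)
    (hZ : Aᵀ * (Bᵀ * B) * A = (n : ℝ) • 1)
    (hRA : Aᵀ * R * A = Matrix.diagonal γ)
    (hγ0 : ∀ j : Fin d, (j : ℕ) < q → γ j = 0)
    (hγpos : ∀ j : Fin d, q ≤ (j : ℕ) → 0 < γ j)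
    (hZX : Submodule.span ℝ
        ((fun j : Fin d => fun i => (B * A) i j) '' {j | (j : ℕ) < q})
      = Submodule.span ℝ (Set.range fun j => fun i => X i j))
    (τ2 τp : ℝ) (hτ : 0 < τ2) (hτp : 0 < τp) :
    let H : Matrix (Fin n) (Fin n) ℝ := X * (Xᵀ * X)⁻¹ * Xᵀ
    Aᵀ * ((1 / τ2) • R + (1 / ((n : ℝ) * τp)) • (Bᵀ * H * B)) * A
      = Matrix.diagonal (fun j : Fin d =>
          if (j : ℕ) < q then 1 / τp else γ j / τ2) := by
  intro H
  set Z : Matrix (Fin n) (Fin d) ℝ := B * A with hZdef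
  -- n ≠ 0
  have hn : (0:ℕ) < n := by
    by_contra h
    push_neg at h
    interval_cases n
    have := X.rank_le_card_height
    simp at this
    omega
  have hnR : (n:ℝ) ≠ 0 := Nat.cast_ne_zero.mpr hn.ne'
  -- Zᵀ Z = n • 1
  have hZZ : Zᵀ * Z = (n:ℝ) • 1 := by
    rw [hZdef, transpose_mul, ← hZ]
    simp [Matrix.mul_assoc]
  -- XᵀX is invertible
  have hXXunit : IsUnit (Xᵀ * X).det := by
    rw [← isUnit_iff_isUnit_det, ← mulVec_injective_iff_isUnit]
    have hrank : (Xᵀ * X).rank = q := by rw [X.rank_transpose_mul_self, hX]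
    have hsurj : Function.Surjective (Xᵀ * X).mulVecLin := by
      rw [← LinearMap.range_eq_top]
      apply Submodule.eq_top_of_finrank_eq
      rw [← Matrix.rank, hrank]
      simp
    exact (LinearMap.injective_iff_surjective).mpr hsurj
  -- H fixes columns of X
  have hHX : H * X = X := by
    show X * (Xᵀ * X)⁻¹ * Xᵀ * X = X
    rw [Matrix.mul_assoc, Matrix.mul_assoc, Matrix.nonsing_inv_mul _ hXXunit,
      Matrix.mul_one]
  have hHfix : ∀ v ∈ Submodule.span ℝ (Set.range fun j => fun i => X i j),
      H *ᵥ v = v := by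
    intro v hv
    induction hv using Submodule.span_induction with
    | mem x hx =>
      obtain ⟨j, rfl⟩ := hx
      funext i
      have h2 : (H * X) i j = X i j := by rw [hHX]
      simpa [Matrix.mul_apply, Matrix.mulVec, dotProduct] using h2
    | zero => simp
    | add x y _ _ hx hy => rw [Matrix.mulVec_add, hx, hy]
    | smul c x _ hx => rw [Matrix.mulVec_smul, hx]
  -- columns of Z
  have hcolZZ : ∀ j k : Fin d, (fun i => Z i j) ⬝ᵥ (fun i => Z i k)
      = (n:ℝ) * (if j = k then 1 else 0) := by
    intro j k
    have h2 : (Zᵀ * Z) j k = ((n:ℝ) • (1 : Matrix (Fin d) (Fin d) ℝ)) j k := by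
      rw [hZZ]
    simpa [Matrix.mul_apply, dotProduct, Matrix.one_apply] using h2
  -- for k ≥ q : Xᵀ *ᵥ Zcol k = 0
  have hXtZ : ∀ k : Fin d, q ≤ (k : ℕ) → Xᵀ *ᵥ (fun i => Z i k) = 0 := by
    intro k hk
    have haux : ∀ v ∈ Submodule.span ℝ
        ((fun j : Fin d => fun i => Z i j) '' {j | (j : ℕ) < q}),
        v ⬝ᵥ (fun i => Z i k) = 0 := by
      intro v hv
      induction hv using Submodule.span_induction with
      | mem x hx =>
        obtain ⟨j', hj', rfl⟩ := hx
        rw [hcolZZ]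
        have : j' ≠ k := by
          intro h
          subst h
          simp only [Set.mem_setOf_eq] at hj'
          omega
        simp [this]
      | zero => simp
      | add x y _ _ hx hy => rw [add_dotProduct, hx, hy, add_zero]
      | smul c x _ hx => rw [smul_dotProduct, hx, smul_zero]
    funext j
    show (fun i => X i j) ⬝ᵥ (fun i => Z i k) = 0
    apply haux
    rw [hZX]
    exact Submodule.subset_span ⟨j, rfl⟩
  -- H *ᵥ Zcol k for k ≥ q is 0
  have hHZhigh : ∀ k : Fin d, q ≤ (k : ℕ) → H *ᵥ (fun i => Z i k) = 0 := by
    intro k hk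
    show (X * (Xᵀ * X)⁻¹ * Xᵀ) *ᵥ (fun i => Z i k) = 0
    rw [← Matrix.mulVec_mulVec, ← Matrix.mulVec_mulVec, hXtZ k hk]
    simp
  have hHZlow : ∀ k : Fin d, (k : ℕ) < q → H *ᵥ (fun i => Z i k) = (fun i => Z i k) := by
    intro k hk
    apply hHfix
    rw [← hZX]
    exact Submodule.subset_span ⟨k, hk, rfl⟩
  -- compute ZᵀHZ
  have hZHZ : Zᵀ * H * Z = (n:ℝ) •
      Matrix.diagonal (fun j : Fin d => if (j:ℕ) < q then (1:ℝ) else 0) := by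
    ext j k
    have hentry : (Zᵀ * H * Z) j k = (fun i => Z i j) ⬝ᵥ (H *ᵥ (fun i => Z i k)) := by
      rw [Matrix.mul_assoc]
      simp [Matrix.mul_apply, dotProduct, Matrix.mulVec, Finset.mul_sum]
    rcases lt_or_ge (k:ℕ) q with hk | hk
    · rw [hentry, hHZlow k hk, hcolZZ]
      by_cases hjk : j = k
      · subst hjk; simp [Matrix.diagonal, hk]
      · simp [Matrix.diagonal_apply_ne _ hjk, hjk]
    · rw [hentry, hHZhigh k hk]
      by_cases hjk : j = k
      · subst hjk
        simp [Matrix.diagonal, Nat.not_lt.mpr hk]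
      · simp [Matrix.diagonal_apply_ne _ hjk]
  -- assemble
  have hBH : Aᵀ * (Bᵀ * H * B) * A = Zᵀ * H * Z := by
    rw [hZdef, transpose_mul]
    simp [Matrix.mul_assoc]
  calc Aᵀ * ((1 / τ2) • R + (1 / ((n : ℝ) * τp)) • (Bᵀ * H * B)) * A
      = (1 / τ2) • (Aᵀ * R * A) + (1 / ((n : ℝ) * τp)) • (Aᵀ * (Bᵀ * H * B) * A) := by
        rw [Matrix.mul_add, Matrix.add_mul, Matrix.mul_smul, Matrix.smul_mul,
          Matrix.mul_smul, Matrix.smul_mul]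
    _ = (1 / τ2) • Matrix.diagonal γ + (1 / ((n : ℝ) * τp)) • ((n:ℝ) •
          Matrix.diagonal (fun j : Fin d => if (j:ℕ) < q then (1:ℝ) else 0)) := by
        rw [hRA, hBH, hZHZ]
    _ = Matrix.diagonal (fun j : Fin d =>
          if (j : ℕ) < q then 1 / τp else γ j / τ2) := by
        rw [smul_smul, ← Matrix.diagonal_smul, ← Matrix.diagonal_smul, Matrix.diagonal_add]
        apply congrArg Matrix.diagonal
        funext j
        simp only [Pi.add_apply, Pi.smul_apply, smul_eq_mul]
        rcases lt_or_ge (j:ℕ) q with hj | hj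
        · rw [if_pos hj, if_pos hj, hγ0 j hj, mul_zero, mul_one, zero_add]
          field_simp
        · rw [if_neg (Nat.not_lt.mpr hj), if_neg (Nat.not_lt.mpr hj), mul_zero, add_zero]
          ring
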